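/- Let x = (a_1, ..., a_m) and y = (b_1, ..., b_t) be compositions of n. If there exists r with 1 ≤ r ≤ min{m, t} such that a_1 + ... + a_r = b_1 + ... + b_r < n, then the meander graph M(x | y) does not consist of a single path. -/

import Mathlib

/-- Two (1-based) positions `u v` are joined by an arc determined by the
composition `L`: they lie in a common block of `L` and are reflections of each
other across the middle of that block. -/
def blockAdj (L : List ℕ) (u v : ℕ) : Prop :=
  ∃ k < L.length,
    (L.take k).sum < u ∧ u ≤ (L.take (k + 1)).sum ∧
    (L.take k).sum < v ∧ v ≤ (L.take (k + 1)).sum ∧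
    u + v = (L.take k).sum + (L.take (k + 1)).sum + 1 ∧ u ≠ v

/-- The meander graph `M(x | y)` on vertices `{1, …, n}` (represented by
`Fin n`, vertex `i` corresponding to the number `i + 1`): top edges come from
the blocks of `x`, bottom edges from the blocks of `y`. -/
def meander (x y : List ℕ) (n : ℕ) : SimpleGraph (Fin n) where
  Adj i j := blockAdj x ((i : ℕ) + 1) ((j : ℕ) + 1) ∨ blockAdj y ((i : ℕ) + 1) ((j : ℕ) + 1)
  symm := by
    constructor
    rintro i j (⟨k, hk, h1, h2, h3, h4, h5, h6⟩ | ⟨k, hk, h1, h2, h3, h4, h5, h6⟩)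
    · exact Or.inl ⟨k, hk, h3, h4, h1, h2, by omega, by omega⟩
    · exact Or.inr ⟨k, hk, h3, h4, h1, h2, by omega, by omega⟩
  loopless := by
    constructor
    rintro i (⟨k, hk, h1, h2, h3, h4, h5, h6⟩ | ⟨k, hk, h1, h2, h3, h4, h5, h6⟩) <;> omega

/-- A graph on `Fin n` consists of a single path when it is isomorphic to the
path graph on `n` vertices. -/
def IsSinglePath {n : ℕ} (G : SimpleGraph (Fin n)) : Prop :=
  Nonempty (G ≃g SimpleGraph.pathGraph n)

lemma sum_take_mono (L : List ℕ) {a b : ℕ} (h : a ≤ b) :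
    (L.take a).sum ≤ (L.take b).sum := by
  have hb : b = a + (b - a) := by omega
  rw [hb, List.take_add, List.sum_append]
  exact Nat.le_add_right _ _

/-- An arc from a composition never crosses the cut after a prefix of blocks. -/
lemma blockAdj_side (L : List ℕ) (r u v : ℕ) (hrL : r ≤ L.length)
    (h : blockAdj L u v) : (u ≤ (L.take r).sum ↔ v ≤ (L.take r).sum) := by
  obtain ⟨k, hk, h1, h2, h3, h4, h5, h6⟩ := h
  rcases lt_or_ge k r with hkr | hkr
  · have : (L.take (k + 1)).sum ≤ (L.take r).sum := sum_take_mono L (by omega)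
    omega
  · have : (L.take r).sum ≤ (L.take k).sum := sum_take_mono L hkr
    omega

/-- If some initial segments of the compositions `x` and
`y` (of common length `r ≥ 1`) have equal sums strictly less than `n`, then
the meander graph `M(x | y)` does not consist of a single path. -/
theorem not_isSinglePath_of_partial_sums_eq
    (n : ℕ) (x y : List ℕ) (hx : x.sum = n) (hy : y.sum = n)
    (hxpos : ∀ a ∈ x, 0 < a) (hypos : ∀ b ∈ y, 0 < b)
    (r : ℕ) (hr : 1 ≤ r) (hrx : r ≤ x.length) (hry : r ≤ y.length)
    (heq : (x.take r).sum = (y.take r).sum) (hlt : (x.take r).sum < n) :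
    ¬ IsSinglePath (meander x y n) := by
  rintro ⟨φ⟩
  -- s ≥ 1
  have hs1 : 1 ≤ (x.take r).sum := by
    cases x with
    | nil => simp at hrx; omega
    | cons a l =>
      have ha : 0 < a := hxpos a List.mem_cons_self
      have h1 := sum_take_mono (a :: l) hr
      simp at h1
      omega
  -- the invariant along edges
  have hadj : ∀ u v : Fin n, (meander x y n).Adj u v →
      ((u : ℕ) + 1 ≤ (x.take r).sum ↔ (v : ℕ) + 1 ≤ (x.take r).sum) := by
    rintro u v (h | h)
    · exact blockAdj_side x r _ _ hrx h
    · rw [heq]; exact blockAdj_side y r _ _ hry h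
  have hwalk : ∀ {u v : Fin n}, (meander x y n).Walk u v →
      ((u : ℕ) + 1 ≤ (x.take r).sum ↔ (v : ℕ) + 1 ≤ (x.take r).sum) := by
    intro u v w
    induction w with
    | nil => rfl
    | cons h _ ih => exact (hadj _ _ h).trans ih
  -- two vertices on opposite sides of the cut
  have hsn : (x.take r).sum < n := hlt
  let a : Fin n := ⟨(x.take r).sum - 1, by omega⟩
  let b : Fin n := ⟨(x.take r).sum, hsn⟩
  -- path graph is connected, so meander is connected, contradiction
  obtain ⟨m, rfl⟩ : ∃ m, n = m + 1 := ⟨n - 1, by omega⟩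
  have hconn := SimpleGraph.pathGraph_connected m
  have hreach : (meander x y (m + 1)).Reachable a b := by
    have := hconn.preconnected (φ a) (φ b)
    have := this.map φ.symm.toHom
    simpa using this
  obtain ⟨w⟩ := hreach
  have := hwalk w
  simp only [a, b] at this
  omega
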